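/- For L ≥ 2, the entries of the transfer matrix t(v) are polynomials in v, t(0) is invertible, and the logarithmic derivative at v = 0 is the sum of adjacent permutation operators: t(0)^{-1} · (d/dv t(v))|_{v=0} = Σ_{j=1}^{L} P_{j,j+1}, where P_{j,j+1} permutes the j-th and (j+1)-th tensor factors of V^{⊗L} and indices are cyclic (P_{L,L+1} := P_{L,1}). Equivalently, t(v) = t(0)·(id + v Σ_{j=1}^{L} P_{j,j+1} + O(v²)). -/

import Mathlib

open Complex

/-- The rational `su(n)` R-matrix `R(v) = v·id + P` on `V ⊗ V`, `V = ℂ^n`, in components: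
`R(v)^{a′b′}_{ab} = v δ_{a a′} δ_{b b′} + δ_{a′ b} δ_{a b′}`. Row `(a′,b′)`, column `(a,b)`. -/
noncomputable def Rmat (n : ℕ) (v : ℂ) :
    Matrix (Fin n × Fin n) (Fin n × Fin n) ℂ := fun p q =>
  (if p.1 = q.1 then v else 0) * (if p.2 = q.2 then 1 else 0) +
    (if p.1 = q.2 then 1 else 0) * (if p.2 = q.1 then 1 else 0)

/-- Cyclic successor `j ↦ j + 1 (mod L)` on `Fin L`. -/
def cyc {L : ℕ} (j : Fin L) : Fin L := ⟨(j.1 + 1) % L, Nat.mod_lt _ j.pos⟩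

/-- The row-to-row transfer matrix `t(v)` of the rational `su(n)` model on `V^{⊗L}`. -/
noncomputable def transferMatrix (n L : ℕ) (v : ℂ) :
    Matrix (Fin L → Fin n) (Fin L → Fin n) ℂ := fun α β =>
  ∑ ν : Fin L → Fin n, ∏ j : Fin L, Rmat n v (ν (cyc j), α j) (ν j, β j)

/-- The permutation operator `P_{j,j+1}` exchanging the `j`-th and `(j+1)`-th tensor
factors of `V^{⊗L}` (indices cyclic, so `P_{L,L+1} = P_{L,1}`). -/
noncomputable def permMat (n L : ℕ) (j : Fin L) :
    Matrix (Fin L → Fin n) (Fin L → Fin n) ℂ := fun α β =>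
  if α = β ∘ (Equiv.swap j (cyc j)) then 1 else 0

/-- For `L ≥ 2`: the entries of `t(v)` are polynomials in `v`, `t(0)` is invertible, and the
logarithmic derivative at `v = 0` is the sum of adjacent transposition operators:
`t(0)⁻¹ · t′(0) = Σ_{j=1}^{L} P_{j,j+1}` (cyclic indices). -/
/- auxiliary machinery -/

def pre {L : ℕ} (_hL : 2 ≤ L) (j : Fin L) : Fin L :=
  ⟨(j.1 + (L - 1)) % L, Nat.mod_lt _ j.pos⟩

def cycE {L : ℕ} (hL : 2 ≤ L) : Equiv.Perm (Fin L) where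
  toFun := cyc
  invFun := pre hL
  left_inv := by
    intro j
    apply Fin.ext
    show ((j.1 + 1) % L + (L - 1)) % L = j.1
    rw [Nat.mod_add_mod]
    have h1 : j.1 + 1 + (L - 1) = j.1 + L := by omega
    rw [h1, Nat.add_mod_right, Nat.mod_eq_of_lt j.2]
  right_inv := by
    intro j
    apply Fin.ext
    show ((j.1 + (L - 1)) % L + 1) % L = j.1
    rw [Nat.mod_add_mod]
    have h1 : j.1 + (L - 1) + 1 = j.1 + L := by omega
    rw [h1, Nat.add_mod_right, Nat.mod_eq_of_lt j.2]

lemma cyc_ne {L : ℕ} (hL : 2 ≤ L) (j : Fin L) : cyc j ≠ j := by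
  intro h
  have hv := congrArg Fin.val h
  simp only [cyc] at hv
  rcases Nat.lt_or_ge (j.1 + 1) L with h' | h'
  · rw [Nat.mod_eq_of_lt h'] at hv; omega
  · have hz : (j.1 + 1) % L = 0 := by
      have : j.1 + 1 = L := by omega
      simp [this]
    omega

lemma cyc_pre {L : ℕ} (hL : 2 ≤ L) (j : Fin L) : cyc (pre hL j) = j := (cycE hL).right_inv j
lemma pre_cyc {L : ℕ} (hL : 2 ≤ L) (j : Fin L) : pre hL (cyc j) = j := (cycE hL).left_inv j

noncomputable def dd {n : ℕ} (a b : Fin n) : ℂ := if a = b then 1 else 0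

lemma prod_dd {L n : ℕ} (f g : Fin L → Fin n) :
    (∏ j : Fin L, dd (f j) (g j)) = if f = g then 1 else 0 := by
  unfold dd; rw [Finset.prod_boole]; simp [funext_iff]

lemma Rmat_eq {n : ℕ} (v : ℂ) (p q : Fin n × Fin n) :
    Rmat n v p q = dd p.1 q.1 * dd p.2 q.2 * v + dd p.1 q.2 * dd p.2 q.1 := by
  unfold Rmat dd; split_ifs <;> ring

noncomputable def aa {n L : ℕ} (α β ν : Fin L → Fin n) (j : Fin L) : ℂ :=
  dd (ν (cyc j)) (ν j) * dd (α j) (β j)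

noncomputable def bb {n L : ℕ} (α β ν : Fin L → Fin n) (j : Fin L) : ℂ :=
  dd (ν (cyc j)) (β j) * dd (α j) (ν j)

noncomputable def entryPoly {n L : ℕ} (α β : Fin L → Fin n) : Polynomial ℂ :=
  ∑ ν : Fin L → Fin n, ∏ j : Fin L,
    (Polynomial.C (aa α β ν j) * Polynomial.X + Polynomial.C (bb α β ν j))

lemma transfer_eval {n L : ℕ} (α β : Fin L → Fin n) (v : ℂ) :
    transferMatrix n L v α β = (entryPoly α β).eval v := by
  unfold transferMatrix entryPoly
  rw [Polynomial.eval_finset_sum]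
  refine Finset.sum_congr rfl fun ν _ => ?_
  rw [Polynomial.eval_prod]
  refine Finset.prod_congr rfl fun j _ => ?_
  simp [Rmat_eq, aa, bb]

lemma derivative_finset_prod {ι : Type*} [DecidableEq ι] (s : Finset ι) (f : ι → Polynomial ℂ) :
    Polynomial.derivative (∏ i ∈ s, f i) =
      ∑ i ∈ s, (∏ j ∈ s.erase i, f j) * Polynomial.derivative (f i) := by
  induction s using Finset.induction_on with
  | empty => simp
  | insert _ _ ha ih =>
    rename_i a s
    rw [Finset.prod_insert ha, Polynomial.derivative_mul, ih, Finset.sum_insert ha,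
      Finset.erase_insert ha, Finset.mul_sum]
    congr 1
    · ring
    · refine Finset.sum_congr rfl fun i hi => ?_
      rw [Finset.erase_insert_of_ne (by rintro rfl; exact ha hi),
        Finset.prod_insert (fun h => ha (Finset.mem_of_mem_erase h))]
      ring

lemma transfer_deriv {n L : ℕ} (α β : Fin L → Fin n) :
    deriv (fun v : ℂ => transferMatrix n L v α β) 0 =
      ∑ ν : Fin L → Fin n, ∑ k : Fin L,
        (∏ j ∈ Finset.univ.erase k, bb α β ν j) * aa α β ν k := by
  have h : (fun v : ℂ => transferMatrix n L v α β) =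
      fun v => (entryPoly α β).eval v := funext fun v => transfer_eval α β v
  rw [h, Polynomial.deriv]
  unfold entryPoly
  rw [map_sum, Polynomial.eval_finset_sum]
  refine Finset.sum_congr rfl fun ν _ => ?_
  rw [derivative_finset_prod, Polynomial.eval_finset_sum]
  refine Finset.sum_congr rfl fun k _ => ?_
  rw [Polynomial.eval_mul, Polynomial.eval_prod]
  congr 1
  · refine Finset.prod_congr rfl fun j _ => ?_
    simp
  · simp

lemma transfer_zero (n L : ℕ) (α β : Fin L → Fin n) :
    transferMatrix n L 0 α β = if (fun j => α (cyc j)) = β then 1 else 0 := by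
  unfold transferMatrix
  have key : ∀ ν : Fin L → Fin n,
      (∏ j : Fin L, Rmat n 0 (ν (cyc j), α j) (ν j, β j)) =
        (if (fun j => ν (cyc j)) = β then 1 else 0) * (if α = ν then 1 else 0) := by
    intro ν
    have e : ∀ j : Fin L, Rmat n 0 (ν (cyc j), α j) (ν j, β j)
        = dd (ν (cyc j)) (β j) * dd (α j) (ν j) := by
      intro j; rw [Rmat_eq]; ring
    simp only [e]
    rw [Finset.prod_mul_distrib, prod_dd, prod_dd]
  simp only [key]
  rw [Finset.sum_eq_single α]
  · simp
  · intro ν _ hν; simp [Ne.symm hν]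
  · simp

lemma nuSum {n L : ℕ} (hL : 2 ≤ L) (α β : Fin L → Fin n) (k : Fin L) :
    ∑ ν : Fin L → Fin n,
        (∏ j ∈ Finset.univ.erase k, bb α β ν j) * aa α β ν k =
      if (fun i => α (cyc (Equiv.swap k (pre hL k) i))) = β then 1 else 0 := by
  set ν₀ : Fin L → Fin n := Function.update α k (α (cyc k)) with hν₀
  have hck : cyc k ≠ k := cyc_ne hL k
  have hν₀k : ν₀ k = α (cyc k) := Function.update_self _ _ _
  have hν₀ne : ∀ j, j ≠ k → ν₀ j = α j := fun j hj => Function.update_of_ne hj _ _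
  rw [Finset.sum_eq_single ν₀]
  · have ha : aa α β ν₀ k = dd (α k) (β k) := by
      unfold aa
      rw [hν₀ne _ hck, hν₀k]
      simp [dd]
    rw [ha]
    have key : ∀ j ∈ Finset.univ.erase k,
        bb α β ν₀ j = dd (α (cyc (Equiv.swap k (pre hL k) j))) (β j) := by
      intro j hj
      have hjk : j ≠ k := (Finset.mem_erase.mp hj).1
      have hb : bb α β ν₀ j = dd (ν₀ (cyc j)) (β j) := by
        unfold bb
        rw [hν₀ne _ hjk]
        simp [dd]
      rw [hb]
      by_cases hjp : j = pre hL k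
      · subst hjp
        rw [cyc_pre, hν₀k, Equiv.swap_apply_right]
      · have hswap : Equiv.swap k (pre hL k) j = j := Equiv.swap_apply_of_ne_of_ne hjk hjp
        rw [hswap, hν₀ne (cyc j) ?_]
        intro hc
        exact hjp (by rw [← pre_cyc hL j, hc])
    rw [Finset.prod_congr rfl key]
    have hk' : dd (α k) (β k) =
        dd (α (cyc (Equiv.swap k (pre hL k) k))) (β k) := by
      rw [Equiv.swap_apply_left, cyc_pre]
    rw [hk', Finset.prod_erase_mul _ _ (Finset.mem_univ k)]
    exact prod_dd _ _
  · intro ν _ hν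
    by_cases h1 : ∀ j, j ≠ k → ν j = α j
    · have hνc : ν (cyc k) = α (cyc k) := h1 _ hck
      have hνk : ν k ≠ α (cyc k) := by
        intro h
        apply hν
        funext j
        by_cases hj : j = k
        · subst hj; rw [h, hν₀k]
        · rw [h1 _ hj, hν₀ne _ hj]
      have ha0 : aa α β ν k = 0 := by
        unfold aa dd
        rw [hνc, if_neg (fun h => hνk h.symm), zero_mul]
      rw [ha0, mul_zero]
    · push_neg at h1
      obtain ⟨j, hjk, hj⟩ := h1
      have hb0 : bb α β ν j = 0 := by
        unfold bb dd
        rw [if_neg (fun h : α j = ν j => hj h.symm), mul_zero]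
      rw [Finset.prod_eq_zero (Finset.mem_erase.mpr ⟨hjk, Finset.mem_univ j⟩) hb0, zero_mul]
  · simp

section final
variable {n L : ℕ}

/-- right inverse of t(0): the inverse cyclic shift matrix -/
noncomputable def Tinv (n L : ℕ) : Matrix (Fin L → Fin n) (Fin L → Fin n) ℂ := fun α β =>
  if (fun j => β (cyc j)) = α then 1 else 0

lemma T_mul_Tinv (hL : 2 ≤ L) : transferMatrix n L 0 * Tinv n L = 1 := by
  funext α β
  rw [Matrix.mul_apply]
  simp only [transfer_zero, Tinv]
  rw [Finset.sum_eq_single (fun j => α (cyc j))]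
  · rw [if_pos rfl, one_mul, Matrix.one_apply]
    refine if_congr ?_ rfl rfl
    constructor
    · intro h
      funext j
      have := congrFun h (pre hL j)
      rw [cyc_pre hL] at this
      exact this.symm
    · rintro rfl; rfl
  · intro γ _ hγ
    rw [if_neg (fun h => hγ h.symm), zero_mul]
  · simp

lemma Tinv_mul_T (hL : 2 ≤ L) : Tinv n L * transferMatrix n L 0 = 1 := by
  funext α β
  rw [Matrix.mul_apply]
  simp only [transfer_zero, Tinv]
  rw [Finset.sum_eq_single (fun j => α (pre hL j))]
  · have h1 : (fun j => α (pre hL (cyc j))) = α := by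
      funext j; rw [pre_cyc hL]
    rw [h1, if_pos rfl, one_mul, Matrix.one_apply]
  · intro γ _ hγ
    rw [if_neg, zero_mul]
    intro h
    apply hγ
    funext j
    have := congrFun h (pre hL j)
    rw [cyc_pre hL] at this
    rw [← this]
  · simp

lemma T_unit (hL : 2 ≤ L) : IsUnit (transferMatrix n L 0) :=
  ⟨⟨transferMatrix n L 0, Tinv n L, T_mul_Tinv hL, Tinv_mul_T hL⟩, rfl⟩

lemma derivEntry (hL : 2 ≤ L) (α β : Fin L → Fin n) :
    deriv (fun v : ℂ => transferMatrix n L v α β) 0 =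
      (transferMatrix n L 0 * ∑ j : Fin L, permMat n L j) α β := by
  rw [transfer_deriv, Finset.sum_comm]
  simp only [nuSum hL]
  rw [Matrix.mul_apply]
  simp only [transfer_zero]
  rw [Finset.sum_eq_single (fun j => α (cyc j))]
  · rw [if_pos rfl, one_mul, Matrix.sum_apply]
    refine Fintype.sum_equiv (cycE hL).symm _ _ fun j => ?_
    show _ = permMat n L (pre hL j) _ β
    unfold permMat
    rw [cyc_pre hL, Equiv.swap_comm (pre hL j) j]
    refine if_congr ?_ rfl rfl
    constructor
    · intro h
      funext i
      have := congrFun h (Equiv.swap j (pre hL j) i)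
      simp only [Equiv.swap_apply_self] at this
      rw [this]
      rfl
    · intro h
      funext i
      have := congrFun h (Equiv.swap j (pre hL j) i)
      simp only [Function.comp_apply, Equiv.swap_apply_self] at this
      exact this
  · intro γ _ hγ
    rw [if_neg (fun h => hγ h.symm), zero_mul]
  · simp

end final

theorem transferMatrix_log_deriv (n L : ℕ) (hn : 1 ≤ n) (hL : 2 ≤ L) :
    (∀ α β, ∃ p : Polynomial ℂ, ∀ v : ℂ, transferMatrix n L v α β = p.eval v) ∧
    IsUnit (transferMatrix n L 0) ∧
    (transferMatrix n L 0)⁻¹ *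
        (Matrix.of fun α β => deriv (fun v : ℂ => transferMatrix n L v α β) 0) =
      ∑ j : Fin L, permMat n L j := by
  refine ⟨fun α β => ⟨entryPoly α β, transfer_eval α β⟩, T_unit hL, ?_⟩
  have hD : (Matrix.of fun α β => deriv (fun v : ℂ => transferMatrix n L v α β) 0) =
      transferMatrix n L 0 * ∑ j : Fin L, permMat n L j := by
    funext α β
    exact derivEntry hL α β
  rw [hD, ← Matrix.mul_assoc, Matrix.nonsing_inv_mul _ ?_, Matrix.one_mul]
  exact (Matrix.isUnit_iff_isUnit_det _).mp (T_unit hL)
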